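/- Let n ≥ 3, n−1 < α ≤ n, 0 < ε₀ < 1, and let q₀ : (0, 1) → (0, ∞) be measurable with ∫_0^{ε₀} dt/(t^{(n−1)/(α−1)} q₀(t)^{1/(α−1)}) < ∞. Define ρ : (0, 1] → ℝ by ρ(s) = (1 + ((n−α)/(α−1)) ∫_s^1 dt/(t^{(n−1)/(α−1)} q₀(t)^{1/(α−1)}))^{(α−1)/(α−n)} when α < n. Then ρ is nondecreasing, 0 < ρ(s) ≤ 1 for all s, and lim_{s→0⁺} ρ(s) = (1 + ((n−α)/(α−1)) ∫_0^1 dt/(t^{(n−1)/(α−1)} q₀(t)^{1/(α−1)}))^{(α−1)/(α−n)} > 0; in particular the radial map f(x) = (x/|x|)ρ(|x|) on Bⁿ \ {0} has cluster set at 0 equal to the sphere of radius lim_{s→0} ρ(s) > 0 and thus does not extend continuously to 0 as a map into ℝⁿ with f(0)=0 being a limit. -/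

import Mathlib

open Set Metric Filter Topology MeasureTheory

/-- Non-removability example: for `n-1 < α < n` and a positive measurable `q₀` with
`∫_0 dt/(t^{(n-1)/(α-1)} q₀(t)^{1/(α-1)}) < ∞`, the function
`ρ(s) = (1 + ((n-α)/(α-1))∫_s^1 dt/(t^{(n-1)/(α-1)} q₀(t)^{1/(α-1)}))^{(α-1)/(α-n)}`
is nondecreasing with `0 < ρ ≤ 1`, has positive limit `L` as `s → 0⁺`, and the radial
map `f(x) = (x/|x|)ρ(|x|)` has cluster set at `0` equal to the sphere of radius `L`;
in particular `f` has no limit at `0`. -/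
theorem radial_map_cluster_set_sphere (n : ℕ) (hn : 3 ≤ n) (α : ℝ)
    (hα1 : (n : ℝ) - 1 < α) (hα2 : α < n)
    (q₀ : ℝ → ℝ) (hq₀m : Measurable q₀) (hq₀ : ∀ t ∈ Ioc (0 : ℝ) 1, 0 < q₀ t)
    (g : ℝ → ℝ)
    (hgdef : g = fun t => (t ^ (((n : ℝ) - 1) / (α - 1)) * q₀ t ^ ((1 : ℝ) / (α - 1)))⁻¹)
    (hInt : IntegrableOn g (Ioc (0 : ℝ) 1) volume)
    (ρ : ℝ → ℝ)
    (hρdef : ρ = fun s =>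
      (1 + (((n : ℝ) - α) / (α - 1)) * ∫ t in Ioc s 1, g t) ^ ((α - 1) / (α - (n : ℝ))))
    (L : ℝ)
    (hL : L = (1 + (((n : ℝ) - α) / (α - 1)) * ∫ t in Ioc (0 : ℝ) 1, g t)
        ^ ((α - 1) / (α - (n : ℝ))))
    (f : EuclideanSpace ℝ (Fin n) → EuclideanSpace ℝ (Fin n))
    (hf : f = fun x => (ρ ‖x‖ / ‖x‖) • x) :
    MonotoneOn ρ (Ioc (0 : ℝ) 1)
    ∧ (∀ s ∈ Ioc (0 : ℝ) 1, 0 < ρ s ∧ ρ s ≤ 1)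
    ∧ Tendsto ρ (nhdsWithin 0 (Ioi 0)) (nhds L)
    ∧ 0 < L
    ∧ {y : EuclideanSpace ℝ (Fin n) |
        ∃ xk : ℕ → EuclideanSpace ℝ (Fin n),
          (∀ k, xk k ∈ ball (0 : EuclideanSpace ℝ (Fin n)) 1 \ {0})
          ∧ Tendsto xk atTop (nhds 0) ∧ Tendsto (fun k => f (xk k)) atTop (nhds y)}
        = sphere (0 : EuclideanSpace ℝ (Fin n)) L
    ∧ ¬ ∃ y : EuclideanSpace ℝ (Fin n),
        Tendsto f (nhdsWithin 0 {(0 : EuclideanSpace ℝ (Fin n))}ᶜ) (nhds y) := by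
  have hn3 : (3 : ℝ) ≤ (n : ℝ) := by exact_mod_cast hn
  have hα1' : 1 < α := by linarith
  have hden : 0 < α - 1 := by linarith
  have hc : 0 < ((n : ℝ) - α) / (α - 1) := div_pos (by linarith) hden
  have he : (α - 1) / (α - (n : ℝ)) < 0 :=
    div_neg_of_pos_of_neg (by linarith) (by linarith)
  -- positivity of g
  have hg : ∀ t ∈ Ioc (0 : ℝ) 1, 0 < g t := by
    intro t ht
    rw [hgdef]
    exact inv_pos.2 (mul_pos (Real.rpow_pos_of_pos ht.1 _)
      (Real.rpow_pos_of_pos (hq₀ t ht) _))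
  -- nonnegativity of the tail integrals
  have hInonneg : ∀ s, 0 ≤ s → 0 ≤ ∫ t in Ioc s 1, g t := by
    intro s hs
    apply setIntegral_nonneg measurableSet_Ioc
    intro t ht
    exact (hg t ⟨lt_of_le_of_lt hs ht.1, ht.2⟩).le
  -- antitonicity of tail integrals
  have hIanti : ∀ s₁ s₂ : ℝ, 0 ≤ s₁ → s₁ ≤ s₂ →
      (∫ t in Ioc s₂ 1, g t) ≤ ∫ t in Ioc s₁ 1, g t := by
    intro s₁ s₂ h0 h12
    apply setIntegral_mono_set (hInt.mono_set (Ioc_subset_Ioc_left h0))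
    · refine (ae_restrict_iff' measurableSet_Ioc).2 (Filter.Eventually.of_forall ?_)
      intro t ht
      exact (hg t ⟨lt_of_le_of_lt h0 ht.1, ht.2⟩).le
    · exact HasSubset.Subset.eventuallyLE (Ioc_subset_Ioc_left h12)
  -- basic facts about ρ
  have hbase : ∀ s, 0 ≤ s →
      1 ≤ 1 + (((n : ℝ) - α) / (α - 1)) * ∫ t in Ioc s 1, g t := by
    intro s hs
    nlinarith [hInonneg s hs, hc]
  have hmono : MonotoneOn ρ (Ioc (0 : ℝ) 1) := by
    intro s₁ hs₁ s₂ hs₂ h12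
    rw [hρdef]
    have h1 := hbase s₂ hs₂.1.le
    have h2 : (1 + (((n : ℝ) - α) / (α - 1)) * ∫ t in Ioc s₂ 1, g t)
        ≤ 1 + (((n : ℝ) - α) / (α - 1)) * ∫ t in Ioc s₁ 1, g t := by
      have := hIanti s₁ s₂ hs₁.1.le h12
      nlinarith [hc]
    exact Real.rpow_le_rpow_of_nonpos (by linarith) h2 he.le
  have hbnd : ∀ s ∈ Ioc (0 : ℝ) 1, 0 < ρ s ∧ ρ s ≤ 1 := by
    intro s hs
    rw [hρdef]
    constructor
    · exact Real.rpow_pos_of_pos (by linarith [hbase s hs.1.le]) _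
    · exact Real.rpow_le_one_of_one_le_of_nonpos (hbase s hs.1.le) he.le
  -- the limit
  have hLpos : 0 < L := by
    rw [hL]; exact Real.rpow_pos_of_pos (by linarith [hbase 0 le_rfl]) _
  have htend : Tendsto ρ (nhdsWithin 0 (Ioi 0)) (nhds L) := by
    -- tail integral tends to full integral
    have hIcc : IntegrableOn g (Icc (0 : ℝ) 1) volume := by
      rwa [integrableOn_Icc_iff_integrableOn_Ioc]
    have hP : ContinuousOn (fun x => ∫ t in Ioc (0 : ℝ) x, g t) (Icc (0 : ℝ) 1) :=
      intervalIntegral.continuousOn_primitive hIcc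
    have hP0 : Tendsto (fun x => ∫ t in Ioc (0 : ℝ) x, g t)
        (nhdsWithin 0 (Ioi 0)) (nhds 0) := by
      have h1 : Tendsto (fun x => ∫ t in Ioc (0 : ℝ) x, g t)
          (nhdsWithin 0 (Icc (0 : ℝ) 1)) (nhds (∫ t in Ioc (0 : ℝ) (0:ℝ), g t)) :=
        hP 0 ⟨le_rfl, by norm_num⟩
      simp only [Ioc_self, Measure.restrict_empty, integral_zero_measure] at h1
      refine h1.mono_left ?_
      rw [← nhdsWithin_Ioc_eq_nhdsGT (by norm_num : (0:ℝ) < 1)]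
      exact nhdsWithin_mono _ Ioc_subset_Icc_self
    have hsplit : ∀ s ∈ Ioc (0 : ℝ) 1,
        (∫ t in Ioc s 1, g t) = (∫ t in Ioc (0:ℝ) 1, g t) - ∫ t in Ioc (0:ℝ) s, g t := by
      intro s hs
      have hd : Disjoint (Ioc (0:ℝ) s) (Ioc s 1) := Ioc_disjoint_Ioc_of_le le_rfl
      have hu : Ioc (0:ℝ) s ∪ Ioc s 1 = Ioc (0:ℝ) 1 := Ioc_union_Ioc_eq_Ioc hs.1.le hs.2
      rw [← hu, setIntegral_union hd measurableSet_Ioc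
        (hInt.mono_set (by rw [← hu]; exact subset_union_left))
        (hInt.mono_set (by rw [← hu]; exact subset_union_right))]
      ring
    have hItend : Tendsto (fun s => ∫ t in Ioc s 1, g t) (nhdsWithin 0 (Ioi 0))
        (nhds (∫ t in Ioc (0:ℝ) 1, g t)) := by
      have := (tendsto_const_nhds (x := ∫ t in Ioc (0:ℝ) 1, g t)
        (f := nhdsWithin (0:ℝ) (Ioi 0))).sub hP0
      rw [sub_zero] at this
      refine this.congr' ?_
      filter_upwards [Ioc_mem_nhdsGT_of_mem (by norm_num : (0:ℝ) ∈ Ico (0:ℝ) 1)] with s hs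
      exact (hsplit s hs).symm
    rw [hρdef, hL]
    have hcont : ContinuousAt (fun x : ℝ =>
        (1 + (((n : ℝ) - α) / (α - 1)) * x) ^ ((α - 1) / (α - (n : ℝ))))
        (∫ t in Ioc (0:ℝ) 1, g t) := by
      apply ContinuousAt.rpow_const
      · exact (continuous_const.add (continuous_const.mul continuous_id)).continuousAt
      · left
        have h1 := hbase 0 le_rfl
        intro h
        rw [h] at h1
        linarith
    exact hcont.tendsto.comp hItend
  -- norm of f
  have hrhonorm : ∀ x : EuclideanSpace ℝ (Fin n),
      x ∈ ball (0 : EuclideanSpace ℝ (Fin n)) 1 \ {0} → ‖f x‖ = ρ ‖x‖ := by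
    intro x hx
    have hx0 : x ≠ 0 := hx.2
    have hxn : 0 < ‖x‖ := norm_pos_iff.2 hx0
    have hx1 : ‖x‖ < 1 := by simpa [mem_ball, dist_zero_right] using hx.1
    have hrpos : 0 < ρ ‖x‖ := (hbnd ‖x‖ ⟨hxn, hx1.le⟩).1
    rw [hf]
    simp only [norm_smul, Real.norm_eq_abs]
    rw [abs_of_pos (div_pos hrpos hxn)]
    field_simp
  -- membership construction: every point of the sphere is a cluster value
  have hsub : ∀ y : EuclideanSpace ℝ (Fin n), ‖y‖ = L →
      ∃ xk : ℕ → EuclideanSpace ℝ (Fin n),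
        (∀ k, xk k ∈ ball (0 : EuclideanSpace ℝ (Fin n)) 1 \ {0})
        ∧ Tendsto xk atTop (nhds 0) ∧ Tendsto (fun k => f (xk k)) atTop (nhds y) := by
    intro y hy
    have hy0 : y ≠ 0 := by
      intro h; rw [h, norm_zero] at hy; exact hLpos.ne hy
    set t : ℕ → ℝ := fun k => ((k : ℝ) + 2)⁻¹ with ht_def
    have htpos : ∀ k, 0 < t k := fun k => by positivity
    have htlt : ∀ k, t k < 1 := by
      intro k
      rw [ht_def]
      rw [inv_lt_one_iff₀]
      right; nlinarith [Nat.cast_nonneg (α := ℝ) k]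
    have htt : Tendsto t atTop (nhds 0) := by
      apply Tendsto.inv_tendsto_atTop
      exact tendsto_atTop_add_const_right _ 2 tendsto_natCast_atTop_atTop
    have htt' : Tendsto t atTop (nhdsWithin 0 (Ioi 0)) :=
      tendsto_nhdsWithin_iff.2 ⟨htt, Filter.Eventually.of_forall (fun k => htpos k)⟩
    refine ⟨fun k => (t k / L) • y, ?_, ?_, ?_⟩
    · intro k
      have hnorm : ‖(t k / L) • y‖ = t k := by
        rw [norm_smul, Real.norm_eq_abs, abs_of_pos (div_pos (htpos k) hLpos), hy]
        field_simp
      constructor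
      · simp only [mem_ball, dist_zero_right, hnorm]; exact htlt k
      · simp only [mem_singleton_iff]
        intro h
        have := hnorm
        rw [h, norm_zero] at this
        exact (htpos k).ne this
    · have : Tendsto (fun k => t k / L) atTop (nhds (0 / L)) := htt.div_const L
      rw [zero_div] at this
      have h2 := this.smul_const y
      rwa [zero_smul] at h2
    · have hnorm : ∀ k, ‖(t k / L) • y‖ = t k := by
        intro k
        rw [norm_smul, Real.norm_eq_abs, abs_of_pos (div_pos (htpos k) hLpos), hy]
        field_simp
      have heq : ∀ k, f ((t k / L) • y) = (ρ (t k) / L) • y := by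
        intro k
        rw [hf]
        simp only [hnorm k, smul_smul]
        congr 1
        field_simp
        exact mul_div_cancel_right₀ _ (htpos k).ne'
      simp only [heq]
      have : Tendsto (fun k => ρ (t k) / L) atTop (nhds (L / L)) :=
        (htend.comp htt').div_const L
      rw [div_self hLpos.ne'] at this
      have h2 := this.smul_const y
      rwa [one_smul] at h2
  -- cluster set equality
  have hset : {y : EuclideanSpace ℝ (Fin n) |
      ∃ xk : ℕ → EuclideanSpace ℝ (Fin n),
        (∀ k, xk k ∈ ball (0 : EuclideanSpace ℝ (Fin n)) 1 \ {0})
        ∧ Tendsto xk atTop (nhds 0) ∧ Tendsto (fun k => f (xk k)) atTop (nhds y)}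
      = sphere (0 : EuclideanSpace ℝ (Fin n)) L := by
    ext y
    simp only [mem_setOf_eq, mem_sphere_iff_norm, sub_zero]
    constructor
    · rintro ⟨xk, hmem, hx0, hfy⟩
      have hnk : Tendsto (fun k => ‖xk k‖) atTop (nhds 0) := by
        simpa using hx0.norm
      have hnk' : Tendsto (fun k => ‖xk k‖) atTop (nhdsWithin 0 (Ioi 0)) := by
        refine tendsto_nhdsWithin_iff.2 ⟨hnk, Filter.Eventually.of_forall fun k => ?_⟩
        exact norm_pos_iff.2 (hmem k).2
      have h1 : Tendsto (fun k => ‖f (xk k)‖) atTop (nhds L) := by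
        refine (htend.comp hnk').congr fun k => ?_
        exact (hrhonorm (xk k) (hmem k)).symm
      have h2 : Tendsto (fun k => ‖f (xk k)‖) atTop (nhds ‖y‖) := hfy.norm
      exact tendsto_nhds_unique h2 h1
    · exact hsub y
  refine ⟨hmono, hbnd, htend, hLpos, hset, ?_⟩
  -- no limit at 0
  rintro ⟨y, hlim⟩
  have i0 : Fin n := ⟨0, by omega⟩
  set v : EuclideanSpace ℝ (Fin n) := EuclideanSpace.single i0 L with hv
  have hvn : ‖v‖ = L := by
    rw [hv, EuclideanSpace.norm_single, Real.norm_eq_abs, abs_of_pos hLpos]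
  have hvn' : ‖(-v : EuclideanSpace ℝ (Fin n))‖ = L := by rw [norm_neg, hvn]
  have key : ∀ z : EuclideanSpace ℝ (Fin n), ‖z‖ = L → y = z := by
    intro z hz
    obtain ⟨xk, hmem, hx0, hfz⟩ := hsub z hz
    have hseq : Tendsto xk atTop
        (nhdsWithin 0 {(0 : EuclideanSpace ℝ (Fin n))}ᶜ) := by
      refine tendsto_nhdsWithin_iff.2 ⟨hx0, Filter.Eventually.of_forall fun k => ?_⟩
      exact (hmem k).2
    exact tendsto_nhds_unique (hlim.comp hseq) hfz
  have h1 := key v hvn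
  have h2 := key (-v) hvn'
  have : v = -v := h1.symm.trans h2
  have hv0 : v ≠ 0 := by
    intro h; rw [h, norm_zero] at hvn; exact hLpos.ne hvn
  apply hv0
  have := congrArg (fun w => w + v) this
  simp only [neg_add_cancel] at this
  have h2v : (2 : ℝ) • v = 0 := by
    rw [two_smul]; exact this
  simpa using smul_eq_zero.mp h2v
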